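/- Let 𝒜 be a nonempty family of infinite real matrices with sup_{A ∈ 𝒜} sup_n ∑_k |a_{n,k}| < ∞. Then limsup_n sup_{A ∈ 𝒜} A_n x ≤ limsup_n x_n for all bounded real sequences x if and only if: (L1) lim_n ∑_{k ∈ E} |a_{n,k}| = 0 uniformly in A ∈ 𝒜 for every finite set E, (L2) lim_n ∑_k a_{n,k} = 1 uniformly in A ∈ 𝒜, and (L3) lim_n ∑_k |a_{n,k}| = 1 uniformly in A ∈ 𝒜. -/

import Mathlib

open Filter

private lemma sumx_abs {a x : ℕ → ℝ} {M : ℝ} (hM : ∀ k, |x k| ≤ M)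
    (hs : Summable fun k => |a k|) : Summable fun k => |a k * x k| := by
  refine Summable.of_nonneg_of_le (fun k => abs_nonneg _) (fun k => ?_) (hs.mul_right M)
  rw [abs_mul]
  exact mul_le_mul_of_nonneg_left (hM k) (abs_nonneg _)

private lemma sumx {a x : ℕ → ℝ} {M : ℝ} (hM : ∀ k, |x k| ≤ M)
    (hs : Summable fun k => |a k|) : Summable fun k => a k * x k :=
  (sumx_abs hM hs).of_abs

private lemma tsumx_le {a x : ℕ → ℝ} {M C : ℝ} (hM : ∀ k, |x k| ≤ M) (hM0 : 0 ≤ M)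
    (hs : Summable fun k => |a k|) (hC : ∑' k, |a k| ≤ C) :
    |∑' k, a k * x k| ≤ M * C := by
  have h1 : |∑' k, a k * x k| ≤ ∑' k, |a k * x k| := by
    have hs' : Summable fun k => ‖a k * x k‖ := by
      simp only [Real.norm_eq_abs]; exact sumx_abs hM hs
    have := norm_tsum_le_tsum_norm hs'
    simp only [Real.norm_eq_abs] at this
    exact this
  have h2 : ∑' k, |a k * x k| ≤ ∑' k, |a k| * M := by
    refine Summable.tsum_le_tsum (fun k => ?_) (sumx_abs hM hs) (hs.mul_right M)
    rw [abs_mul]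
    exact mul_le_mul_of_nonneg_left (hM k) (abs_nonneg _)
  have h3 : (∑' k, |a k| * M) = (∑' k, |a k|) * M := tsum_mul_right
  nlinarith [mul_le_mul_of_nonneg_right hC hM0]

set_option maxHeartbeats 2000000 in
theorem stmt7 (𝒜 : Set (ℕ → ℕ → ℝ)) (h𝒜 : 𝒜.Nonempty) (C : ℝ)
    (hnorm : ∀ A ∈ 𝒜, ∀ n, Summable (fun k => |A n k|) ∧ ∑' k, |A n k| ≤ C) :
    (∀ x : ℕ → ℝ, (∃ M, ∀ n, |x n| ≤ M) →
        limsup (fun n => sSup ((fun A : ℕ → ℕ → ℝ => ∑' k, A n k * x k) '' 𝒜)) atTop ≤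
          limsup x atTop) ↔
      ((∀ E : Finset ℕ, ∀ ε > 0, ∃ N, ∀ n ≥ N, ∀ A ∈ 𝒜, |(∑ k ∈ E, |A n k|)| ≤ ε) ∧
        (∀ ε > 0, ∃ N, ∀ n ≥ N, ∀ A ∈ 𝒜, |(∑' k, A n k) - 1| ≤ ε) ∧
        (∀ ε > 0, ∃ N, ∀ n ≥ N, ∀ A ∈ 𝒜, |(∑' k, |A n k|) - 1| ≤ ε)) := by
  constructor
  · intro hP
    -- the basic tool: testing with a bounded sequence
    have tool : ∀ (x : ℕ → ℝ) (M : ℝ), 0 ≤ M → (∀ k, |x k| ≤ M) → ∀ ε > 0,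
        ∃ N, ∀ n ≥ N, ∀ A ∈ 𝒜, ∑' k, A n k * x k ≤ limsup x atTop + ε := by
      intro x M hM0 hM ε hε
      have hub : ∀ n, ∀ y ∈ (fun A : ℕ → ℕ → ℝ => ∑' k, A n k * x k) '' 𝒜, y ≤ M * C := by
        rintro n y ⟨A, hA, rfl⟩
        exact le_trans (le_abs_self _) (tsumx_le hM hM0 (hnorm A hA n).1 (hnorm A hA n).2)
      have hFb : IsBoundedUnder (· ≤ ·) atTop
          (fun n => sSup ((fun A : ℕ → ℕ → ℝ => ∑' k, A n k * x k) '' 𝒜)) :=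
        isBoundedUnder_of ⟨M * C, fun n => csSup_le (h𝒜.image _) (hub n)⟩
      have hls : limsup (fun n => sSup ((fun A : ℕ → ℕ → ℝ => ∑' k, A n k * x k) '' 𝒜)) atTop
          < limsup x atTop + ε :=
        lt_of_le_of_lt (hP x ⟨M, hM⟩) (lt_add_of_pos_right _ hε)
      obtain ⟨N, hN⟩ := eventually_atTop.1 (eventually_lt_of_limsup_lt hls hFb)
      exact ⟨N, fun n hn A hA =>
        le_trans (le_csSup ⟨M * C, fun y hy => hub n y hy⟩ ⟨A, hA, rfl⟩) (hN n hn).le⟩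
    -- single matrix entry tends to 0 uniformly
    have hL1s : ∀ j : ℕ, ∀ ε > 0, ∃ N, ∀ n ≥ N, ∀ A ∈ 𝒜, |A n j| ≤ ε := by
      intro j ε hε
      have hx : ∀ s : ℝ, |s| ≤ 1 → ∃ N, ∀ n ≥ N, ∀ A ∈ 𝒜, s * A n j ≤ ε := by
        intro s hs
        have hxb : ∀ k, |(if k = j then s else 0 : ℝ)| ≤ 1 := by
          intro k; split <;> simp [hs]
        have hls : limsup (fun k => if k = j then s else 0 : ℕ → ℝ) atTop = 0 := by
          have hev0 : ∀ᶠ k in atTop, (if k = j then s else 0 : ℝ) = (fun _ : ℕ => (0:ℝ)) k :=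
            eventually_atTop.2 ⟨j+1, fun k hk => if_neg (by omega)⟩
          rw [limsup_congr hev0, limsup_const]
        obtain ⟨N, hN⟩ := tool (fun k => if k = j then s else 0) 1 zero_le_one hxb ε hε
        refine ⟨N, fun n hn A hA => ?_⟩
        have h := hN n hn A hA
        rw [hls, zero_add] at h
        have ht : ∑' k, A n k * (if k = j then s else 0) = s * A n j := by
          rw [tsum_eq_single j fun b hb => by simp [hb]]
          simp [mul_comm]
        rwa [ht] at h
      obtain ⟨N1, h1⟩ := hx 1 (by norm_num)
      obtain ⟨N2, h2⟩ := hx (-1) (by norm_num)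
      refine ⟨max N1 N2, fun n hn A hA => abs_le.2 ⟨?_, ?_⟩⟩
      · have := h2 n (le_trans (le_max_right _ _) hn) A hA; linarith
      · have := h1 n (le_trans (le_max_left _ _) hn) A hA; linarith
    -- condition (L1)
    have hL1 : ∀ E : Finset ℕ, ∀ ε > 0, ∃ N, ∀ n ≥ N, ∀ A ∈ 𝒜, ∑ k ∈ E, |A n k| ≤ ε := by
      intro E
      induction E using Finset.induction_on with
      | empty => exact fun ε hε => ⟨0, fun n _ A _ => by simp [hε.le]⟩
      | @insert j s hj ih =>
        intro ε hε
        obtain ⟨N1, h1⟩ := hL1s j (ε/2) (by positivity)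
        obtain ⟨N2, h2⟩ := ih (ε/2) (by positivity)
        refine ⟨max N1 N2, fun n hn A hA => ?_⟩
        rw [Finset.sum_insert hj]
        have e1 := h1 n (le_trans (le_max_left _ _) hn) A hA
        have e2 := h2 n (le_trans (le_max_right _ _) hn) A hA
        have := le_abs_self (A n j)
        have := neg_abs_le (A n j)
        linarith [abs_le.1 e1]
    -- condition (L2)
    have hL2 : ∀ ε > 0, ∃ N, ∀ n ≥ N, ∀ A ∈ 𝒜, |(∑' k, A n k) - 1| ≤ ε := by
      intro ε hε
      obtain ⟨N1, h1⟩ := tool (fun _ => 1) 1 zero_le_one (fun k => by norm_num) ε hε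
      obtain ⟨N2, h2⟩ := tool (fun _ => -1) 1 zero_le_one (fun k => by norm_num) ε hε
      refine ⟨max N1 N2, fun n hn A hA => ?_⟩
      have e1 := h1 n (le_trans (le_max_left _ _) hn) A hA
      have e2 := h2 n (le_trans (le_max_right _ _) hn) A hA
      rw [limsup_const (1 : ℝ)] at e1
      rw [limsup_const (-1 : ℝ)] at e2
      simp only [mul_one] at e1
      have hneg : ∑' k, A n k * (-1) = -∑' k, A n k := by
        simp only [mul_neg_one]
        exact tsum_neg
      rw [hneg] at e2
      exact abs_le.2 ⟨by linarith, by linarith⟩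
    -- condition (L3), upper bound, via gliding hump
    have hump : ∀ ε > 0, ∃ N, ∀ n ≥ N, ∀ A ∈ 𝒜, ∑' k, |A n k| ≤ 1 + ε := by
      intro ε hε
      by_contra hcon
      push_neg at hcon
      have step : ∀ pn pm : ℕ, ∃ q : ℕ × ℕ × (ℕ → ℕ → ℝ),
          q.2.2 ∈ 𝒜 ∧ pn < q.1 ∧ pm < q.2.1 ∧
          (∑ k ∈ Finset.range pm, |q.2.2 q.1 k|) ≤ ε/8 ∧
          (∑' k, |q.2.2 q.1 (k + q.2.1)|) ≤ ε/8 ∧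
          1 + ε < ∑' k, |q.2.2 q.1 k| := by
        intro pn pm
        obtain ⟨N1, hN1⟩ := hL1 (Finset.range pm) (ε/8) (by positivity)
        obtain ⟨n, hn, A, hA, hbig⟩ := hcon (max N1 (pn+1))
        have hsumm := (hnorm A hA n).1
        have hev : ∀ᶠ m in atTop,
            dist (∑ k ∈ Finset.range m, |A n k|) (∑' k, |A n k|) < ε/8 :=
          (Metric.tendsto_nhds.1 hsumm.hasSum.tendsto_sum_nat) (ε/8) (by positivity)
        obtain ⟨m0, hm0⟩ := eventually_atTop.1 hev
        have hd := hm0 (max m0 (pm+1)) (le_max_left _ _)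
        rw [Real.dist_eq] at hd
        have hda := abs_lt.1 hd
        have htail : ∑' k, |A n (k + max m0 (pm+1))| ≤ ε/8 := by
          have hsplit := Summable.sum_add_tsum_nat_add (f := fun k => |A n k|) (max m0 (pm+1)) hsumm
          linarith [hda.1, hda.2]
        exact ⟨(n, max m0 (pm+1), A), hA,
          lt_of_lt_of_le (Nat.lt_succ_self pn) (le_trans (le_max_right N1 (pn+1)) hn),
          lt_of_lt_of_le (Nat.lt_succ_self pm) (le_max_right m0 (pm+1)),
          hN1 n (le_trans (le_max_left _ _) hn) A hA, htail, hbig⟩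
      choose st hst using step
      set seq : ℕ → ℕ × ℕ × (ℕ → ℕ → ℝ) :=
        fun i => Nat.rec (st 0 0) (fun _ p => st p.1 p.2.1) i with hseqdef
      set pmv : ℕ → ℕ := fun i => Nat.rec 0 (fun j _ => (seq j).2.1) i with hpmvdef
      have hseq : ∀ i, (seq i).2.2 ∈ 𝒜 ∧ pmv i < (seq i).2.1 ∧
          (∑ k ∈ Finset.range (pmv i), |(seq i).2.2 (seq i).1 k|) ≤ ε/8 ∧
          (∑' k, |(seq i).2.2 (seq i).1 (k + (seq i).2.1)|) ≤ ε/8 ∧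
          1 + ε < ∑' k, |(seq i).2.2 (seq i).1 k| := by
        intro i
        cases i with
        | zero =>
          have h := hst 0 0
          exact ⟨h.1, h.2.2.1, h.2.2.2.1, h.2.2.2.2.1, h.2.2.2.2.2⟩
        | succ j =>
          have h := hst (seq j).1 (seq j).2.1
          exact ⟨h.1, h.2.2.1, h.2.2.2.1, h.2.2.2.2.1, h.2.2.2.2.2⟩
      have hnmono : StrictMono (fun i => (seq i).1) :=
        strictMono_nat_of_lt_succ (fun i => (hst (seq i).1 (seq i).2.1).2.1)
      have hmmono : StrictMono (fun i => (seq i).2.1) :=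
        strictMono_nat_of_lt_succ (fun i => (hseq (i+1)).2.1)
      have hklt : ∀ k, k < (seq k).2.1 := by
        intro k
        induction k with
        | zero => exact (hseq 0).2.1
        | succ j ih => exact Nat.lt_of_le_of_lt ih (hmmono (Nat.lt_succ_self j))
      have hcov : ∀ k, ∃ i, k < (seq i).2.1 := fun k => ⟨k, hklt k⟩
      set x : ℕ → ℝ := fun k =>
        if 0 ≤ (seq (Nat.find (hcov k))).2.2 (seq (Nat.find (hcov k))).1 k then 1 else -1
        with hxdef
      have hx1 : ∀ k, |x k| ≤ 1 := by
        intro k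
        rw [hxdef]
        dsimp only
        split <;> norm_num
      have hidx : ∀ i k, pmv i ≤ k → k < (seq i).2.1 → Nat.find (hcov k) = i := by
        intro i k hk1 hk2
        rw [Nat.find_eq_iff]
        refine ⟨hk2, fun j hj hc => ?_⟩
        have hle : (seq j).2.1 ≤ pmv i := by
          cases i with
          | zero => exact absurd hj (Nat.not_lt_zero j)
          | succ l => exact hmmono.monotone (Nat.lt_succ_iff.1 hj)
        omega
      have hxval : ∀ i k, pmv i ≤ k → k < (seq i).2.1 →
          (seq i).2.2 (seq i).1 k * x k = |(seq i).2.2 (seq i).1 k| := by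
        intro i k hk1 hk2
        rw [hxdef]
        dsimp only
        rw [hidx i k hk1 hk2]
        by_cases h : 0 ≤ (seq i).2.2 (seq i).1 k
        · rw [if_pos h, mul_one, abs_of_nonneg h]
        · rw [if_neg h, mul_neg_one, abs_of_neg (lt_of_not_ge h)]
      have hkey : ∀ i, 1 + ε/2 ≤ ∑' k, (seq i).2.2 (seq i).1 k * x k := by
        intro i
        obtain ⟨hA, hpm, hsmall, htail, hbig⟩ := hseq i
        have hsumm : Summable fun k => |(seq i).2.2 (seq i).1 k| :=
          (hnorm (seq i).2.2 hA (seq i).1).1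
        have hsx : Summable fun k => (seq i).2.2 (seq i).1 k * x k := sumx hx1 hsumm
        have hsplit : ∑' k, (seq i).2.2 (seq i).1 k * x k
            = (∑ k ∈ Finset.range (seq i).2.1, (seq i).2.2 (seq i).1 k * x k)
              + ∑' k, (seq i).2.2 (seq i).1 (k + (seq i).2.1) * x (k + (seq i).2.1) :=
          (Summable.sum_add_tsum_nat_add (seq i).2.1 hsx).symm
        have hsplitabs : ∑' k, |(seq i).2.2 (seq i).1 k|
            = (∑ k ∈ Finset.range (seq i).2.1, |(seq i).2.2 (seq i).1 k|)
              + ∑' k, |(seq i).2.2 (seq i).1 (k + (seq i).2.1)| :=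
          (Summable.sum_add_tsum_nat_add (seq i).2.1 hsumm).symm
        have hcons : (∑ k ∈ Finset.Ico 0 (pmv i), (seq i).2.2 (seq i).1 k * x k)
            + ∑ k ∈ Finset.Ico (pmv i) (seq i).2.1, (seq i).2.2 (seq i).1 k * x k
            = ∑ k ∈ Finset.Ico 0 (seq i).2.1, (seq i).2.2 (seq i).1 k * x k :=
          Finset.sum_Ico_consecutive _ (Nat.zero_le _) hpm.le
        have hconsabs : (∑ k ∈ Finset.Ico 0 (pmv i), |(seq i).2.2 (seq i).1 k|)
            + ∑ k ∈ Finset.Ico (pmv i) (seq i).2.1, |(seq i).2.2 (seq i).1 k|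
            = ∑ k ∈ Finset.Ico 0 (seq i).2.1, |(seq i).2.2 (seq i).1 k| :=
          Finset.sum_Ico_consecutive _ (Nat.zero_le _) hpm.le
        have hblock : ∑ k ∈ Finset.Ico (pmv i) (seq i).2.1, (seq i).2.2 (seq i).1 k * x k
            = ∑ k ∈ Finset.Ico (pmv i) (seq i).2.1, |(seq i).2.2 (seq i).1 k| := by
          refine Finset.sum_congr rfl fun k hk => ?_
          rw [Finset.mem_Ico] at hk
          exact hxval i k hk.1 hk.2
        have hpre : |∑ k ∈ Finset.Ico 0 (pmv i), (seq i).2.2 (seq i).1 k * x k| ≤ ε/8 := by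
          calc |∑ k ∈ Finset.Ico 0 (pmv i), (seq i).2.2 (seq i).1 k * x k|
              ≤ ∑ k ∈ Finset.Ico 0 (pmv i), |(seq i).2.2 (seq i).1 k * x k| :=
                Finset.abs_sum_le_sum_abs _ _
            _ ≤ ∑ k ∈ Finset.Ico 0 (pmv i), |(seq i).2.2 (seq i).1 k| := by
                refine Finset.sum_le_sum fun k _ => ?_
                rw [abs_mul]
                exact le_trans (mul_le_mul_of_nonneg_left (hx1 k) (abs_nonneg _))
                  (le_of_eq (mul_one _))
            _ = ∑ k ∈ Finset.range (pmv i), |(seq i).2.2 (seq i).1 k| := by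
                rw [Finset.range_eq_Ico]
            _ ≤ ε/8 := hsmall
        have hpreabs : ∑ k ∈ Finset.Ico 0 (pmv i), |(seq i).2.2 (seq i).1 k| ≤ ε/8 := by
          rw [← Finset.range_eq_Ico]
          exact hsmall
        have hpreabs0 : 0 ≤ ∑ k ∈ Finset.Ico 0 (pmv i), |(seq i).2.2 (seq i).1 k| :=
          Finset.sum_nonneg fun _ _ => abs_nonneg _
        have htl : |∑' k, (seq i).2.2 (seq i).1 (k + (seq i).2.1) * x (k + (seq i).2.1)| ≤ ε/8 := by
          have hsabs : Summable fun k => |(seq i).2.2 (seq i).1 (k + (seq i).2.1)| :=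
            (summable_nat_add_iff (seq i).2.1).2 hsumm
          have h1 : |∑' k, (seq i).2.2 (seq i).1 (k + (seq i).2.1) * x (k + (seq i).2.1)|
              ≤ 1 * (ε/8) :=
            tsumx_le (fun k => hx1 (k + (seq i).2.1)) zero_le_one hsabs htail
          linarith
        have hrange : ∑ k ∈ Finset.range (seq i).2.1, (seq i).2.2 (seq i).1 k * x k
            = ∑ k ∈ Finset.Ico 0 (seq i).2.1, (seq i).2.2 (seq i).1 k * x k := by
          rw [Finset.range_eq_Ico]
        have hrangeabs : ∑ k ∈ Finset.range (seq i).2.1, |(seq i).2.2 (seq i).1 k|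
            = ∑ k ∈ Finset.Ico 0 (seq i).2.1, |(seq i).2.2 (seq i).1 k| := by
          rw [Finset.range_eq_Ico]
        have htail0 : 0 ≤ ∑' k, |(seq i).2.2 (seq i).1 (k + (seq i).2.1)| :=
          tsum_nonneg fun _ => abs_nonneg _
        have habs1 := abs_le.1 hpre
        have habs2 := abs_le.1 htl
        linarith
      have hub1 : ∀ n, ∀ y ∈ (fun A : ℕ → ℕ → ℝ => ∑' k, A n k * x k) '' 𝒜, y ≤ 1 * C := by
        rintro n y ⟨A, hA, rfl⟩
        exact le_trans (le_abs_self _) (tsumx_le hx1 zero_le_one (hnorm A hA n).1 (hnorm A hA n).2)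
      have hfreq : ∃ᶠ n in atTop, 1 + ε/2 ≤
          sSup ((fun A : ℕ → ℕ → ℝ => ∑' k, A n k * x k) '' 𝒜) := by
        refine frequently_atTop.2 fun N => ⟨(seq N).1, hnmono.le_apply, ?_⟩
        refine le_trans (hkey N) (le_csSup ⟨1 * C, fun y hy => hub1 (seq N).1 y hy⟩ ?_)
        exact ⟨(seq N).2.2, (hseq N).1, rfl⟩
      have hlims : 1 + ε/2 ≤
          limsup (fun n => sSup ((fun A : ℕ → ℕ → ℝ => ∑' k, A n k * x k) '' 𝒜)) atTop :=
        le_limsup_of_frequently_le hfreq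
          (isBoundedUnder_of ⟨1 * C, fun n => csSup_le (h𝒜.image _) (hub1 n)⟩)
      have hle := hP x ⟨1, hx1⟩
      have hxle : limsup x atTop ≤ 1 :=
        limsup_le_of_le
          (isCoboundedUnder_le_of_eventually_le atTop
            (Eventually.of_forall fun k => (abs_le.1 (hx1 k)).1))
          (Eventually.of_forall fun k => (abs_le.1 (hx1 k)).2)
      linarith
    refine ⟨?_, hL2, ?_⟩
    · intro E ε hε
      obtain ⟨N, hN⟩ := hL1 E ε hε
      refine ⟨N, fun n hn A hA => ?_⟩
      rw [abs_of_nonneg (Finset.sum_nonneg fun k _ => abs_nonneg _)]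
      exact hN n hn A hA
    · intro ε hε
      obtain ⟨N1, h1⟩ := hump ε hε
      obtain ⟨N2, h2⟩ := hL2 ε hε
      refine ⟨max N1 N2, fun n hn A hA => ?_⟩
      have e1 := h1 n (le_trans (le_max_left _ _) hn) A hA
      have e2 := h2 n (le_trans (le_max_right _ _) hn) A hA
      have e3 : (∑' k, A n k) ≤ ∑' k, |A n k| :=
        Summable.tsum_le_tsum (fun k => le_abs_self _) (hnorm A hA n).1.of_abs (hnorm A hA n).1
      exact abs_le.2 ⟨by linarith [abs_le.1 e2], by linarith⟩
  · rintro ⟨hL1, hL2, hL3⟩ x ⟨M, hM⟩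
    have hM0 : 0 ≤ M := le_trans (abs_nonneg _) (hM 0)
    obtain ⟨A₀, hA₀⟩ := id h𝒜
    have hub : ∀ n, ∀ y ∈ (fun A : ℕ → ℕ → ℝ => ∑' k, A n k * x k) '' 𝒜, y ≤ M * C := by
      rintro n y ⟨A, hA, rfl⟩
      exact le_trans (le_abs_self _) (tsumx_le hM hM0 (hnorm A hA n).1 (hnorm A hA n).2)
    have hFlb : ∀ n, -(M*C) ≤ sSup ((fun A : ℕ → ℕ → ℝ => ∑' k, A n k * x k) '' 𝒜) := by
      intro n
      refine le_trans ?_ (le_csSup ⟨M * C, fun y hy => hub n y hy⟩ ⟨A₀, hA₀, rfl⟩)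
      have h := tsumx_le hM hM0 (hnorm A₀ hA₀ n).1 (hnorm A₀ hA₀ n).2
      linarith [neg_abs_le (∑' k, A₀ n k * x k)]
    have hxbdd : IsBoundedUnder (· ≤ ·) atTop x :=
      isBoundedUnder_of ⟨M, fun k => (abs_le.1 (hM k)).2⟩
    set L := limsup x atTop with hLdef
    refine le_of_forall_pos_le_add ?_
    intro ε hε
    have hden : (0:ℝ) < 3 + 2*|L| + 3*M := by
      have := abs_nonneg L; linarith
    set δ := min 1 (ε / (3 + 2*|L| + 3*M)) with hδdef
    have hδ : 0 < δ := lt_min one_pos (div_pos hε hden)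
    have hδ1 : δ ≤ 1 := min_le_left _ _
    have hδε : δ * (3 + 2*|L| + 3*M) ≤ ε :=
      (le_div_iff₀ hden).1 (min_le_right _ _)
    obtain ⟨K, hK⟩ := eventually_atTop.1
      (eventually_lt_of_limsup_lt (lt_add_of_pos_right L hδ) hxbdd)
    obtain ⟨N1, h1⟩ := hL1 (Finset.range K) δ hδ
    obtain ⟨N2, h2⟩ := hL2 δ hδ
    obtain ⟨N3, h3⟩ := hL3 δ hδ
    have hev : ∀ n ≥ max N1 (max N2 N3),
        sSup ((fun A : ℕ → ℕ → ℝ => ∑' k, A n k * x k) '' 𝒜) ≤ L + ε := by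
      intro n hn
      refine csSup_le (h𝒜.image _) ?_
      rintro y ⟨A, hA, rfl⟩
      show ∑' k, A n k * x k ≤ L + ε
      have hsumm : Summable fun k => |A n k| := (hnorm A hA n).1
      have hsa : Summable (A n) := hsumm.of_abs
      have hsx : Summable fun k => A n k * x k := sumx hM hsumm
      have hb1 : ∑ k ∈ Finset.range K, |A n k| ≤ δ :=
        le_trans (le_abs_self _) (h1 n (le_trans (le_max_left _ _) hn) A hA)
      have hb1' : (0:ℝ) ≤ ∑ k ∈ Finset.range K, |A n k| :=
        Finset.sum_nonneg fun _ _ => abs_nonneg _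
      have hb2 := abs_le.1 (h2 n (le_trans (le_trans (le_max_left _ _) (le_max_right N1 _)) hn) A hA)
      have hb3 := abs_le.1 (h3 n (le_trans (le_trans (le_max_right _ _) (le_max_right N1 _)) hn) A hA)
      -- split the series at K
      have hsplit : ∑' k, A n k * x k
          = (∑ k ∈ Finset.range K, A n k * x k) + ∑' k, A n (k+K) * x (k+K) :=
        (Summable.sum_add_tsum_nat_add K hsx).symm
      have hpart1 : ∑ k ∈ Finset.range K, A n k * x k ≤ M * δ := by
        have e1 : ∑ k ∈ Finset.range K, A n k * x k ≤ ∑ k ∈ Finset.range K, |A n k| * M := by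
          refine Finset.sum_le_sum fun k _ => ?_
          have := le_abs_self (A n k * x k)
          rw [abs_mul] at this
          exact le_trans this (mul_le_mul_of_nonneg_left (hM k) (abs_nonneg _))
        rw [← Finset.sum_mul] at e1
        nlinarith
      have hsas : Summable fun k => A n (k+K) := (summable_nat_add_iff K).2 hsa
      have hsabs : Summable fun k => |A n (k+K)| := (summable_nat_add_iff K).2 hsumm
      have hsP : Summable fun k => (|A n (k+K)| + A n (k+K))/2 := (hsabs.add hsas).div_const 2
      have hsQ : Summable fun k => (|A n (k+K)| - A n (k+K))/2 := (hsabs.sub hsas).div_const 2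
      have hterm : ∀ k, A n (k+K) * x (k+K)
          ≤ (|A n (k+K)| + A n (k+K))/2 * (L+δ) + (|A n (k+K)| - A n (k+K))/2 * M := by
        intro k
        have hy1 : x (k+K) ≤ L + δ := (hK (k+K) (Nat.le_add_left K k)).le
        have hy2 : -M ≤ x (k+K) := (abs_le.1 (hM (k+K))).1
        have ha1 := le_abs_self (A n (k+K))
        have ha2 := neg_abs_le (A n (k+K))
        have hp0 : (0:ℝ) ≤ (|A n (k+K)| + A n (k+K))/2 := by linarith
        have hq0 : (0:ℝ) ≤ (|A n (k+K)| - A n (k+K))/2 := by linarith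
        have e1 : (|A n (k+K)| + A n (k+K))/2 * x (k+K)
            ≤ (|A n (k+K)| + A n (k+K))/2 * (L+δ) := mul_le_mul_of_nonneg_left hy1 hp0
        have e2 : (|A n (k+K)| - A n (k+K))/2 * (-x (k+K))
            ≤ (|A n (k+K)| - A n (k+K))/2 * M :=
          mul_le_mul_of_nonneg_left (by linarith) hq0
        nlinarith
      have hsg : Summable fun k => (|A n (k+K)| + A n (k+K))/2 * (L+δ)
          + (|A n (k+K)| - A n (k+K))/2 * M := (hsP.mul_right _).add (hsQ.mul_right _)
      have hpart2 : ∑' k, A n (k+K) * x (k+K)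
          ≤ (∑' k, (|A n (k+K)| + A n (k+K))/2) * (L+δ)
            + (∑' k, (|A n (k+K)| - A n (k+K))/2) * M := by
        have := Summable.tsum_le_tsum hterm (sumx (fun k => hM (k+K)) hsabs) hsg
        rwa [Summable.tsum_add (hsP.mul_right _) (hsQ.mul_right _), tsum_mul_right, tsum_mul_right] at this
      set P := ∑' k, (|A n (k+K)| + A n (k+K))/2 with hPdef
      set Q := ∑' k, (|A n (k+K)| - A n (k+K))/2 with hQdef
      have hPval : P = ((∑' k, |A n (k+K)|) + ∑' k, A n (k+K))/2 := by
        rw [hPdef, tsum_div_const, Summable.tsum_add hsabs hsas]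
      have hQval : Q = ((∑' k, |A n (k+K)|) - ∑' k, A n (k+K))/2 := by
        rw [hQdef, tsum_div_const, Summable.tsum_sub hsabs hsas]
      have hT2 : (∑' k, |A n (k+K)|) = (∑' k, |A n k|) - ∑ k ∈ Finset.range K, |A n k| := by
        have := Summable.sum_add_tsum_nat_add (f := fun k => |A n k|) K hsumm
        linarith
      have hT1 : (∑' k, A n (k+K)) = (∑' k, A n k) - ∑ k ∈ Finset.range K, A n k := by
        have := Summable.sum_add_tsum_nat_add (f := fun k => A n k) K hsa
        linarith
      have hs1 : |∑ k ∈ Finset.range K, A n k| ≤ ∑ k ∈ Finset.range K, |A n k| :=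
        Finset.abs_sum_le_sum_abs _ _
      have hs1' := abs_le.1 hs1
      -- bounds on P and Q
      have hPlow : 1 - 2*δ ≤ P := by rw [hPval, hT2, hT1]; linarith [hb2.1, hb3.1]
      have hPhigh : P ≤ 1 + 2*δ := by rw [hPval, hT2, hT1]; linarith [hb2.2, hb3.2]
      have hQhigh : Q ≤ 3*δ/2 := by rw [hQval, hT2, hT1]; linarith [hb2.1, hb3.2]
      have hQlow : 0 ≤ Q := by
        rw [hQdef]
        refine tsum_nonneg fun k => ?_
        have := le_abs_self (A n (k+K)); linarith
      have hQM : Q * M ≤ (3*δ/2) * M := mul_le_mul_of_nonneg_right hQhigh hM0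
      have hLa1 := le_abs_self L
      have hLa2 := neg_abs_le L
      have hPL : P * (L+δ) ≤ (L+δ) + 2*δ*(|L|+1) := by
        have c1 : (0:ℝ) ≤ (|L| + 1 - (L+δ)) * (2*δ - (P-1)) :=
          mul_nonneg (by linarith) (by linarith)
        have c2 : (0:ℝ) ≤ (|L| + 1 + (L+δ)) * (2*δ + (P-1)) :=
          mul_nonneg (by linarith) (by linarith)
        nlinarith
      have hMδ : 0 ≤ δ * M := mul_nonneg hδ.le hM0
      rw [hsplit]
      have := hpart2
      nlinarith
    refine limsup_le_of_le ((isBoundedUnder_of ⟨-(M*C), hFlb⟩).isCoboundedUnder_le)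
      (eventually_atTop.2 ⟨max N1 (max N2 N3), hev⟩)
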